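/- An element P of the degree ≥ 1 part of the truncated tensor algebra T^n(ℝ^d) is a Lie polynomial (i.e. lies in Lie^n(ℝ^d)) if and only if σ_{I⧢J}(P) = 0 for all nonempty words I, J with |I|+|J| ≤ n, where σ_{I⧢J} is the linear functional given by the coefficient of the shuffle product of I and J. -/

import Mathlib

open scoped BigOperators

section TruncatedTensorAlgebra

variable {K : Type*} [Field K] {d : ℕ}

/-- Concatenation (tensor) product on the tensor algebra, modelled as functions on words. -/
def tmul (f g : List (Fin d) → K) : List (Fin d) → K :=
  fun l => ∑ i ∈ Finset.range (l.length + 1), f (l.take i) * g (l.drop i)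

/-- Truncation: kill all coordinates indexed by words of length `> n`. -/
def trunc (n : ℕ) (f : List (Fin d) → K) : List (Fin d) → K :=
  fun l => if l.length ≤ n then f l else 0

/-- The product of the truncated tensor algebra `T^n(K^d)`. -/
def tmulT (n : ℕ) (f g : List (Fin d) → K) : List (Fin d) → K :=
  trunc n (tmul f g)

/-- The Lie bracket `[f,g] = f ⊗ g - g ⊗ f` in the truncated tensor algebra. -/
def lieT (n : ℕ) (f g : List (Fin d) → K) : List (Fin d) → K :=
  tmulT n f g - tmulT n g f

/-- The generator `e_i` of the tensor algebra. -/
def gen (i : Fin d) : List (Fin d) → K := fun l => if l = [i] then 1 else 0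

/-- The unit `1` of the tensor algebra. -/
def tone : List (Fin d) → K := fun l => if l = [] then 1 else 0

/-- `InLie d n K P` says that `P` belongs to the free Lie algebra `Lie^n(K^d)`, the
smallest Lie subalgebra of `T^n(K^d)` containing the generators `e_1, …, e_d`. -/
inductive InLie (d n : ℕ) (K : Type*) [Field K] : (List (Fin d) → K) → Prop
  | gen (i : Fin d) : InLie d n K (gen i)
  | zero : InLie d n K 0
  | add {f g : List (Fin d) → K} : InLie d n K f → InLie d n K g → InLie d n K (f + g)
  | smul (c : K) {f : List (Fin d) → K} : InLie d n K f → InLie d n K (c • f)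
  | bracket {f g : List (Fin d) → K} :
      InLie d n K f → InLie d n K g → InLie d n K (lieT n f g)

/-- Powers in the truncated tensor algebra. -/
def powT (n : ℕ) (f : List (Fin d) → K) : ℕ → (List (Fin d) → K)
  | 0 => tone
  | r + 1 => tmulT n f (powT n f r)

/-- The tensor exponential `exp(f) = ∑ f^{⊗ r}/r!` in `T^n(K^d)`. -/
noncomputable def texp (n : ℕ) (f : List (Fin d) → K) : List (Fin d) → K :=
  ∑ r ∈ Finset.range (n + 1), ((r.factorial : K)⁻¹) • powT n f r

/-- The tensor logarithm `log(1 + Q) = ∑_{r ≥ 1} (-1)^{r-1} Q^{⊗ r}/r` in `T^n(K^d)`. -/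
noncomputable def tlog (n : ℕ) (f : List (Fin d) → K) : List (Fin d) → K :=
  ∑ r ∈ Finset.Icc 1 n, (((-1 : K) ^ (r - 1)) / (r : K)) • powT n (f - tone) r

/-- The multiset of shuffles (interleavings) of two words. -/
def shuffles {α : Type*} : List α → List α → Multiset (List α)
  | [], l => {l}
  | l, [] => {l}
  | a :: as, b :: bs =>
      ((shuffles as (b :: bs)).map (a :: ·)) + ((shuffles (a :: as) bs).map (b :: ·))
  termination_by l₁ l₂ => l₁.length + l₂.length
  decreasing_by
    all_goals simp only [List.length_cons]
    all_goals omega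

/-- The shuffle linear form `σ_{I ⧢ J}` evaluated on a tensor `P`. -/
def shuffleForm (P : List (Fin d) → K) (I J : List (Fin d)) : K :=
  ((shuffles I J).map P).sum

end TruncatedTensorAlgebra

section ReeAux

set_option linter.unusedTactic false
set_option linter.unreachableTactic false

variable {K : Type*} [Field K] {d : ℕ}

lemma shuffles_nil_left {α : Type*} (l : List α) : shuffles ([] : List α) l = {l} := by
  cases l <;> rw [shuffles] <;> simp

lemma shuffles_nil_right {α : Type*} (l : List α) : shuffles l ([] : List α) = {l} := by
  cases l <;> rw [shuffles] <;> simp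

lemma shuffles_cons_cons {α : Type*} (a b : α) (as bs : List α) :
    shuffles (a :: as) (b :: bs)
      = ((shuffles as (b :: bs)).map (a :: ·)) + ((shuffles (a :: as) bs).map (b :: ·)) := by
  rw [shuffles]

lemma length_of_mem_shuffles {α : Type*} :
    ∀ (I J : List α), ∀ v ∈ shuffles I J, v.length = I.length + J.length := by
  intro I
  induction I with
  | nil => intro J v hv; rw [shuffles_nil_left] at hv; simp_all
  | cons a as ihI =>
    intro J
    induction J with
    | nil => intro v hv; rw [shuffles_nil_right] at hv; simp_all
    | cons b bs ihJ =>
      intro v hv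
      rw [shuffles_cons_cons] at hv
      rcases Multiset.mem_add.1 hv with h | h <;> obtain ⟨w, hw, rfl⟩ := Multiset.mem_map.1 h
      · have := ihI (b :: bs) w hw; simp only [List.length_cons] at this ⊢; omega
      · have := ihJ w hw; simp only [List.length_cons] at this ⊢; omega

lemma count_cons_map_cons {α : Type*} [DecidableEq α] (e c : α) (u : List α)
    (S : Multiset (List α)) :
    Multiset.count (e :: u) (S.map (c :: ·)) = if e = c then Multiset.count u S else 0 := by
  split_ifs with h
  · subst h; exact Multiset.count_map_eq_count' _ _ (fun x y hxy => by simpa using hxy) _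
  · refine Multiset.count_eq_zero.2 fun hmem => ?_
    obtain ⟨w, _, hw⟩ := Multiset.mem_map.1 hmem
    exact h (List.cons_eq_cons.1 hw).1.symm

lemma count_shuffles_zero_of_length {α : Type*} [DecidableEq α] (w s t : List α)
    (h : w.length ≠ s.length + t.length) : Multiset.count w (shuffles s t) = 0 := by
  refine Multiset.count_eq_zero.2 fun hmem => h ?_
  exact length_of_mem_shuffles s t w hmem

lemma shuffleForm_nil_left (P : List (Fin d) → K) (J : List (Fin d)) :
    shuffleForm P [] J = P J := by
  simp [shuffleForm, shuffles_nil_left]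

lemma shuffleForm_nil_right (P : List (Fin d) → K) (I : List (Fin d)) :
    shuffleForm P I [] = P I := by
  simp [shuffleForm, shuffles_nil_right]

lemma shuffleForm_cons_cons (P : List (Fin d) → K) (a b : Fin d) (as bs : List (Fin d)) :
    shuffleForm P (a :: as) (b :: bs)
      = shuffleForm (fun l => P (a :: l)) as (b :: bs)
        + shuffleForm (fun l => P (b :: l)) (a :: as) bs := by
  simp [shuffleForm, shuffles_cons_cons, Multiset.map_map, Function.comp]

lemma shuffleForm_add (P Q : List (Fin d) → K) (I J : List (Fin d)) :
    shuffleForm (P + Q) I J = shuffleForm P I J + shuffleForm Q I J := by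
  simp [shuffleForm, Pi.add_apply, ← Multiset.sum_map_add]

lemma shuffleForm_smul (c : K) (P : List (Fin d) → K) (I J : List (Fin d)) :
    shuffleForm (c • P) I J = c * shuffleForm P I J := by
  simp [shuffleForm, Pi.smul_apply, smul_eq_mul, ← Multiset.sum_map_mul_left]

lemma shuffleForm_sub (P Q : List (Fin d) → K) (I J : List (Fin d)) :
    shuffleForm (P - Q) I J = shuffleForm P I J - shuffleForm Q I J := by
  rw [sub_eq_add_neg, shuffleForm_add, show -Q = (-1 : K) • Q by funext v; simp,
    shuffleForm_smul]
  ring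

lemma shuffleForm_congr (P Q : List (Fin d) → K) (I J : List (Fin d))
    (h : ∀ v ∈ shuffles I J, P v = Q v) : shuffleForm P I J = shuffleForm Q I J := by
  unfold shuffleForm
  rw [Multiset.map_congr rfl h]

lemma tmul_nil (f g : List (Fin d) → K) : tmul f g [] = f [] * g [] := by
  simp [tmul]

lemma tmul_cons (f g : List (Fin d) → K) (c : Fin d) (w : List (Fin d)) :
    tmul f g (c :: w) = f [] * g (c :: w) + tmul (fun l => f (c :: l)) g w := by
  unfold tmul
  simp only [List.length_cons]
  rw [Finset.sum_range_succ']
  simp only [List.take_succ_cons, List.drop_succ_cons, List.take_zero, List.drop_zero]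
  ring

lemma shuffleForm_trunc (n : ℕ) (h : List (Fin d) → K) (I J : List (Fin d))
    (hlen : I.length + J.length ≤ n) :
    shuffleForm (trunc n h) I J = shuffleForm h I J := by
  refine shuffleForm_congr _ _ _ _ fun v hv => ?_
  have := length_of_mem_shuffles I J v hv
  simp [trunc, this, hlen]

lemma shuffleForm_tmul :
    ∀ (I J : List (Fin d)) (f g : List (Fin d) → K),
    shuffleForm (tmul f g) I J =
      ∑ i ∈ Finset.range (I.length + 1), ∑ j ∈ Finset.range (J.length + 1),
        shuffleForm f (I.take i) (J.take j) * shuffleForm g (I.drop i) (J.drop j) := by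
  intro I
  induction I with
  | nil =>
    intro J f g
    simp only [shuffleForm_nil_left, List.length_nil, zero_add, Finset.range_one,
      Finset.sum_singleton, List.take_nil, List.drop_nil]
    rfl
  | cons a as ihI =>
    intro J
    induction J with
    | nil =>
      intro f g
      simp only [shuffleForm_nil_right, List.length_nil, zero_add, Finset.range_one,
        Finset.sum_singleton, List.take_nil, List.drop_nil, List.take_zero, List.drop_zero]
      rfl
    | cons b bs ihJ =>
      intro f g
      simp only [List.length_cons]
      have key : ∀ (i : ℕ),
          (∑ j ∈ Finset.range (bs.length + 1 + 1),
            shuffleForm f ((a :: as).take (i + 1)) ((b :: bs).take j) *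
              shuffleForm g ((a :: as).drop (i + 1)) ((b :: bs).drop j))
          = (∑ j ∈ Finset.range (bs.length + 1 + 1),
              shuffleForm (fun l => f (a :: l)) (as.take i) ((b :: bs).take j) *
                shuffleForm g (as.drop i) ((b :: bs).drop j))
            + ∑ j ∈ Finset.range (bs.length + 1),
                shuffleForm (fun l => f (b :: l)) ((a :: as).take (i + 1)) (bs.take j) *
                  shuffleForm g ((a :: as).drop (i + 1)) (bs.drop j) := by
        intro i
        rw [Finset.sum_range_succ']
        conv_rhs => rw [Finset.sum_range_succ']
        simp only [List.take_succ_cons, List.drop_succ_cons, List.take_zero, List.drop_zero,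
          shuffleForm_cons_cons, shuffleForm_nil_right, add_mul]
        rw [Finset.sum_add_distrib]
        ring
      have hT0 : (∑ j ∈ Finset.range (bs.length + 1 + 1),
          shuffleForm f ((a :: as).take 0) ((b :: bs).take j) *
            shuffleForm g ((a :: as).drop 0) ((b :: bs).drop j))
          = (∑ j ∈ Finset.range (bs.length + 1),
              shuffleForm (fun l => f (b :: l)) ((a :: as).take 0) (bs.take j) *
                shuffleForm g ((a :: as).drop 0) (bs.drop j))
            + f [] * shuffleForm g (a :: as) (b :: bs) := by
        rw [Finset.sum_range_succ']
        simp only [List.take_zero, List.drop_zero, List.take_succ_cons, List.drop_succ_cons,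
          shuffleForm_nil_left]
      have hsplit :
          (∑ i ∈ Finset.range (as.length + 1 + 1), ∑ j ∈ Finset.range (bs.length + 1 + 1),
              shuffleForm f ((a :: as).take i) ((b :: bs).take j) *
                shuffleForm g ((a :: as).drop i) ((b :: bs).drop j))
          = (∑ i ∈ Finset.range (as.length + 1), ∑ j ∈ Finset.range (bs.length + 1 + 1),
              shuffleForm (fun l => f (a :: l)) (as.take i) ((b :: bs).take j) *
                shuffleForm g (as.drop i) ((b :: bs).drop j))
            + ((∑ i ∈ Finset.range (as.length + 1 + 1), ∑ j ∈ Finset.range (bs.length + 1),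
                shuffleForm (fun l => f (b :: l)) ((a :: as).take i) (bs.take j) *
                  shuffleForm g ((a :: as).drop i) (bs.drop j))
              + f [] * shuffleForm g (a :: as) (b :: bs)) := by
        rw [Finset.sum_range_succ']
        rw [Finset.sum_congr rfl (fun i _ => key i), Finset.sum_add_distrib, hT0]
        conv_rhs =>
          rw [show (∑ i ∈ Finset.range (as.length + 1 + 1), ∑ j ∈ Finset.range (bs.length + 1),
              shuffleForm (fun l => f (b :: l)) ((a :: as).take i) (bs.take j) *
                shuffleForm g ((a :: as).drop i) (bs.drop j))
            = (∑ i ∈ Finset.range (as.length + 1), ∑ j ∈ Finset.range (bs.length + 1),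
                shuffleForm (fun l => f (b :: l)) ((a :: as).take (i + 1)) (bs.take j) *
                  shuffleForm g ((a :: as).drop (i + 1)) (bs.drop j))
              + ∑ j ∈ Finset.range (bs.length + 1),
                  shuffleForm (fun l => f (b :: l)) ((a :: as).take 0) (bs.take j) *
                    shuffleForm g ((a :: as).drop 0) (bs.drop j) from
              Finset.sum_range_succ' _ _]
        ring
      rw [hsplit, shuffleForm_cons_cons (tmul f g)]
      have hA : (fun l => tmul f g (a :: l))
          = ((f [] • fun l => g (a :: l)) + tmul (fun l => f (a :: l)) g) := by
        funext l; simp [tmul_cons, Pi.add_apply, Pi.smul_apply, smul_eq_mul]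
      have hB : (fun l => tmul f g (b :: l))
          = ((f [] • fun l => g (b :: l)) + tmul (fun l => f (b :: l)) g) := by
        funext l; simp [tmul_cons, Pi.add_apply, Pi.smul_apply, smul_eq_mul]
      rw [hA, hB, shuffleForm_add, shuffleForm_add, shuffleForm_smul, shuffleForm_smul,
        ihI (b :: bs) (fun l => f (a :: l)) g, ihJ (fun l => f (b :: l)) g,
        shuffleForm_cons_cons g]
      simp only [List.length_cons]
      ring

lemma good_of_inLie {n : ℕ} {P : List (Fin d) → K} (h : InLie d n K P) :
    P [] = 0 ∧ ∀ I J : List (Fin d), I ≠ [] → J ≠ [] → I.length + J.length ≤ n →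
      shuffleForm P I J = 0 := by
  induction h with
  | gen i =>
    refine ⟨by simp [gen], fun I J hI hJ _ => ?_⟩
    refine Multiset.sum_eq_zero fun x hx => ?_
    obtain ⟨v, hv, rfl⟩ := Multiset.mem_map.1 hx
    have hlen := length_of_mem_shuffles I J v hv
    have h1 : v.length ≠ 1 := by
      cases I with
      | nil => exact absurd rfl hI
      | cons a as =>
        cases J with
        | nil => exact absurd rfl hJ
        | cons b bs => simp only [List.length_cons] at hlen; omega
    simp only [gen, ite_eq_right_iff]
    intro hvv
    rw [hvv] at h1
    simp at h1
  | zero =>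
    refine ⟨rfl, fun I J _ _ _ => ?_⟩
    refine Multiset.sum_eq_zero fun x hx => ?_
    obtain ⟨v, hv, rfl⟩ := Multiset.mem_map.1 hx
    rfl
  | add hf hg ihf ihg =>
    exact ⟨by simp [Pi.add_apply, ihf.1, ihg.1],
      fun I J hI hJ hn => by
        rw [shuffleForm_add, ihf.2 I J hI hJ hn, ihg.2 I J hI hJ hn]; ring⟩
  | smul c hf ihf =>
    exact ⟨by simp [Pi.smul_apply, ihf.1],
      fun I J hI hJ hn => by rw [shuffleForm_smul, ihf.2 I J hI hJ hn]; ring⟩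
  | @bracket f g hf hg ihf ihg =>
    constructor
    · simp [lieT, tmulT, trunc, tmul, ihf.1, ihg.1]
    · intro I J hI hJ hn
      have main : ∀ (f g : List (Fin d) → K), f [] = 0 → g [] = 0 →
          (∀ I' J', I' ≠ [] → J' ≠ [] → I'.length + J'.length ≤ n →
            shuffleForm f I' J' = 0) →
          (∀ I' J', I' ≠ [] → J' ≠ [] → I'.length + J'.length ≤ n →
            shuffleForm g I' J' = 0) →
          (∑ i ∈ Finset.range (I.length + 1), ∑ j ∈ Finset.range (J.length + 1),
            shuffleForm f (I.take i) (J.take j) * shuffleForm g (I.drop i) (J.drop j))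
          = f J * g I + f I * g J := by
        intro f g hf0 hg0 hfv hgv
        have hIpos : 0 < I.length := List.length_pos_iff.2 hI
        have hJpos : 0 < J.length := List.length_pos_iff.2 hJ
        have hF0 : (∑ j ∈ Finset.range (J.length + 1),
            shuffleForm f (I.take 0) (J.take j) * shuffleForm g (I.drop 0) (J.drop j))
            = f J * g I := by
          rw [Finset.sum_eq_single_of_mem J.length (by simp)]
          · simp [shuffleForm_nil_left, shuffleForm_nil_right, List.take_length,
              List.drop_length]
          · intro j hj hne
            simp only [List.take_zero, List.drop_zero, shuffleForm_nil_left]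
            have hdj : J.drop j ≠ [] := by
              simp only [ne_eq, List.drop_eq_nil_iff]
              simp only [Finset.mem_range] at hj
              omega
            rw [hgv I (J.drop j) hI hdj (by simp only [List.length_drop]; omega)]
            ring
        have hFtop : (∑ j ∈ Finset.range (J.length + 1),
            shuffleForm f (I.take I.length) (J.take j)
              * shuffleForm g (I.drop I.length) (J.drop j))
            = f I * g J := by
          rw [Finset.sum_eq_single_of_mem 0 (by simp)]
          · simp [shuffleForm_nil_left, shuffleForm_nil_right, List.take_length,
              List.drop_length]
          · intro j hj hne
            have htj : J.take j ≠ [] := by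
              simp only [ne_eq, List.take_eq_nil_iff]
              push_neg
              exact ⟨hne, hJ⟩
            rw [List.take_length, List.drop_length,
              hfv I (J.take j) hI htj (by simp only [List.length_take]; omega)]
            ring
        have hFmid : ∀ i, 0 < i → i < I.length →
            (∑ j ∈ Finset.range (J.length + 1),
              shuffleForm f (I.take i) (J.take j) * shuffleForm g (I.drop i) (J.drop j))
            = 0 := by
          intro i hi0 hiI
          refine Finset.sum_eq_zero fun j hj => ?_
          rcases Nat.eq_zero_or_pos j with rfl | hjpos
          · have hdi : I.drop i ≠ [] := by
              simp only [ne_eq, List.drop_eq_nil_iff]; omega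
            rw [List.take_zero, List.drop_zero,
              hgv (I.drop i) J hdi hJ (by simp only [List.length_drop]; omega)]
            ring
          · have hti : I.take i ≠ [] := by
              simp only [ne_eq, List.take_eq_nil_iff]; push_neg; exact ⟨by omega, hI⟩
            have htj : J.take j ≠ [] := by
              simp only [ne_eq, List.take_eq_nil_iff]; push_neg; exact ⟨by omega, hJ⟩
            rw [hfv (I.take i) (J.take j) hti htj
              (by simp only [List.length_take]; omega)]
            ring
        rw [Finset.sum_range_succ']
        rw [Finset.sum_eq_single_of_mem (I.length - 1)
          (by simp only [Finset.mem_range]; omega)]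
        · rw [show I.length - 1 + 1 = I.length by omega, hFtop, hF0]; ring
        · intro i hi hne
          simp only [Finset.mem_range] at hi
          exact hFmid (i + 1) (by omega) (by omega)
      rw [lieT, shuffleForm_sub, tmulT, tmulT, shuffleForm_trunc n _ _ _ hn,
        shuffleForm_trunc n _ _ _ hn, shuffleForm_tmul, shuffleForm_tmul,
        main f g ihf.1 ihg.1 ihf.2 ihg.2, main g f ihg.1 ihf.1 ihg.2 ihf.2]
      ring

noncomputable def rbrk (n : ℕ) : List (Fin d) → (List (Fin d) → K)
  | [] => 0
  | [a] => gen a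
  | a :: b :: u => lieT n (gen a) (rbrk n (b :: u))

lemma tmul_gen_left (a : Fin d) (g : List (Fin d) → K) (c : Fin d) (y : List (Fin d)) :
    tmul (gen a) g (c :: y) = if c = a then g y else 0 := by
  unfold tmul
  rw [Finset.sum_eq_single_of_mem 1 (by simp)]
  · simp only [List.take_succ_cons, List.take_zero, List.drop_succ_cons, List.drop_zero, gen]
    by_cases h : c = a <;> simp [h]
  · intro j hj hne
    have hz : gen (K := K) a ((c :: y).take j) = 0 := by
      simp only [gen, ite_eq_right_iff]
      intro hEq
      have h1 : ((c :: y).take j).length = 1 := by rw [hEq]; rfl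
      rw [List.length_take, List.length_cons] at h1
      simp only [Finset.mem_range, List.length_cons] at hj
      omega
    rw [hz, zero_mul]

lemma tmul_gen_right (g : List (Fin d) → K) (a : Fin d) (x' : List (Fin d)) (e : Fin d) :
    tmul g (gen a) (x' ++ [e]) = if e = a then g x' else 0 := by
  unfold tmul
  rw [Finset.sum_eq_single_of_mem x'.length
    (by simp only [Finset.mem_range, List.length_append, List.length_cons, List.length_nil]
        omega)]
  · rw [List.take_left, List.drop_left]
    simp only [gen]
    by_cases h : e = a <;> simp [h]
  · intro j hj hne
    have hz : gen (K := K) a ((x' ++ [e]).drop j) = 0 := by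
      simp only [gen, ite_eq_right_iff]
      intro hEq
      have h1 : ((x' ++ [e]).drop j).length = 1 := by rw [hEq]; rfl
      rw [List.length_drop, List.length_append, List.length_cons, List.length_nil] at h1
      simp only [Finset.mem_range, List.length_append, List.length_cons, List.length_nil] at hj
      omega
    rw [hz, mul_zero]

lemma rbrk_support (n : ℕ) :
    ∀ (w x : List (Fin d)), x.length ≠ w.length → rbrk (K := K) n w x = 0 := by
  intro w
  induction w with
  | nil => intro x _; simp [rbrk]
  | cons a u ih =>
    intro x hx
    cases u with
    | nil =>
      rw [rbrk]
      simp only [gen, ite_eq_right_iff]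
      intro h; rw [h] at hx; simp at hx
    | cons b u' =>
      rw [rbrk]
      have h1 : tmul (gen a) (rbrk (K := K) n (b :: u')) x = 0 := by
        cases x with
        | nil => rw [tmul_nil]; simp [gen]
        | cons c y =>
          rw [tmul_gen_left]
          have hy : rbrk (K := K) n (b :: u') y = 0 := by
            apply ih; simp only [List.length_cons] at hx ⊢; omega
          simp [hy]
      have h2 : tmul (rbrk (K := K) n (b :: u')) (gen a) x = 0 := by
        rcases List.eq_nil_or_concat x with rfl | ⟨x', e, hx2⟩
        · rw [tmul_nil]; simp [gen]
        · rw [List.concat_eq_append] at hx2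
          subst hx2
          rw [tmul_gen_right]
          have hy : rbrk (K := K) n (b :: u') x' = 0 := by
            apply ih
            simp only [List.length_append, List.length_cons, List.length_nil,
              List.length_singleton] at hx ⊢
            omega
          simp [hy]
      simp [lieT, tmulT, trunc, h1, h2]

lemma inLie_rbrk (n : ℕ) : ∀ (w : List (Fin d)), w ≠ [] → InLie d n K (rbrk (K := K) n w) := by
  intro w
  induction w with
  | nil => intro h; exact absurd rfl h
  | cons a u ih =>
    intro _
    cases u with
    | nil =>
      have h : rbrk (K := K) n [a] = gen a := by rw [rbrk]
      rw [h]; exact .gen a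
    | cons b u' =>
      have h : rbrk (K := K) n (a :: b :: u') = lieT n (gen a) (rbrk n (b :: u')) := by
        rw [rbrk]
      rw [h]; exact .bracket (.gen a) (ih (by simp))

lemma rbrk_cons_eval (n : ℕ) (a b : Fin d) (u' : List (Fin d))
    (c : Fin d) (y : List (Fin d)) (x' : List (Fin d)) (e : Fin d)
    (hlen : (b :: u').length + 1 ≤ n)
    (hx : c :: y = x' ++ [e]) :
    rbrk (K := K) n (a :: b :: u') (c :: y)
      = (if c = a then rbrk (K := K) n (b :: u') y else 0)
        - (if e = a then rbrk (K := K) n (b :: u') x' else 0) := by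
  rw [rbrk]
  by_cases hn : (c :: y).length ≤ n
  · rw [lieT, tmulT, tmulT]
    simp only [Pi.sub_apply, trunc, hn, if_pos]
    rw [tmul_gen_left, show (c :: y) = x' ++ [e] from hx, tmul_gen_right]
  · push_neg at hn
    have hL : y.length + 1 = x'.length + 1 := by
      have := congrArg List.length hx
      simpa using this
    have hy0 : rbrk (K := K) n (b :: u') y = 0 := by
      apply rbrk_support
      simp only [List.length_cons] at hn hlen ⊢
      omega
    have hx0 : rbrk (K := K) n (b :: u') x' = 0 := by
      apply rbrk_support
      simp only [List.length_cons] at hn hlen ⊢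
      omega
    have hnn : ¬ (y.length + 1 ≤ n) := by simp only [List.length_cons] at hn; omega
    simp [lieT, tmulT, trunc, hnn, hy0, hx0]

lemma shuffle_antipode :
    ∀ (N : ℕ) (y : List (Fin d)), y.length ≤ N → y ≠ [] → ∀ u : List (Fin d),
      ∑ j ∈ Finset.range (y.length + 1),
        (-1 : K) ^ j * (Multiset.count u (shuffles (y.take j) ((y.drop j).reverse)) : K) = 0 := by
  intro N
  induction N with
  | zero =>
    intro y hy hne u
    cases y with
    | nil => exact absurd rfl hne
    | cons c z => simp at hy
  | succ N ihN =>
    intro y hlen hne u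
    obtain ⟨c, z, rfl⟩ : ∃ c z, y = c :: z := by
      cases y with
      | nil => exact absurd rfl hne
      | cons c z => exact ⟨_, _, rfl⟩
    rcases List.eq_nil_or_concat z with rfl | ⟨z'', b, hz⟩
    · rw [show (([c] : List (Fin d)).length + 1) = 2 from rfl,
        Finset.sum_range_succ, Finset.sum_range_succ, Finset.sum_range_zero]
      simp [shuffles_nil_left, shuffles_nil_right]
    · -- u = [] case first
      rw [List.concat_eq_append] at hz
      rcases u with _ | ⟨e, u'⟩
      · refine Finset.sum_eq_zero fun j hj => ?_
        rw [count_shuffles_zero_of_length]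
        · ring
        · simp only [Finset.mem_range, List.length_cons] at hj
          simp only [List.length_nil, List.length_take, List.length_reverse, List.length_drop,
            List.length_cons]
          omega
      · have hzlen : z.length = z''.length + 1 := by rw [hz]; simp
        have hlen' : z.length + 1 ≤ N + 1 := by simpa using hlen
        have hCsucc : ∀ j, j < z.length →
            (Multiset.count (e :: u')
                (shuffles ((c :: z).take (j + 1)) (((c :: z).drop (j + 1)).reverse)) : K)
            = (if e = c then
                (Multiset.count u' (shuffles (z.take j) ((z.drop j).reverse)) : K) else 0)
              + (if e = b then
                (Multiset.count u'
                  (shuffles ((c :: z'').take (j + 1)) (((c :: z'').drop (j + 1)).reverse)) : K)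
                  else 0) := by
          intro j hj
          have hj' : j ≤ z''.length := by omega
          rw [List.take_succ_cons, List.drop_succ_cons, List.take_succ_cons,
            List.drop_succ_cons]
          rw [show z.take j = z''.take j by rw [hz, List.take_append_of_le_length hj'],
            show z.drop j = z''.drop j ++ [b] by rw [hz, List.drop_append_of_le_length hj']]
          rw [show (z''.drop j ++ [b]).reverse = b :: (z''.drop j).reverse by simp]
          rw [shuffles_cons_cons, Multiset.count_add, count_cons_map_cons, count_cons_map_cons]
          push_cast
          split_ifs <;> ring
        have hClast :
            (Multiset.count (e :: u')
                (shuffles ((c :: z).take (z.length + 1))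
                  (((c :: z).drop (z.length + 1)).reverse)) : K)
            = (if e = c then
                (Multiset.count u' (shuffles (z.take z.length) ((z.drop z.length).reverse)) : K)
                else 0) := by
          rw [show z.length + 1 = (c :: z).length from rfl, List.take_length, List.drop_length,
            List.take_length, List.drop_length]
          simp only [List.reverse_nil, shuffles_nil_right, Multiset.count_singleton]
          by_cases hec : e = c
          · subst hec
            by_cases huz : u' = z <;> simp [huz, List.cons_eq_cons]
          · simp [List.cons_eq_cons, hec]
        have hC0 :
            (Multiset.count (e :: u')
                (shuffles ((c :: z).take 0) (((c :: z).drop 0).reverse)) : K)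
            = (if e = b then
                (Multiset.count u'
                  (shuffles ((c :: z'').take 0) (((c :: z'').drop 0).reverse)) : K) else 0) := by
          rw [List.take_zero, List.drop_zero, List.take_zero, List.drop_zero,
            shuffles_nil_left, shuffles_nil_left]
          rw [show (c :: z).reverse = b :: (z''.reverse ++ [c]) by rw [hz]; simp,
            show (c :: z'').reverse = z''.reverse ++ [c] by simp]
          simp only [Multiset.count_singleton]
          by_cases heb : e = b
          · subst heb
            by_cases hu2 : u' = z''.reverse ++ [c] <;> simp [hu2, List.cons_eq_cons]
          · simp [List.cons_eq_cons, heb]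
        -- main computation
        rw [List.length_cons, Finset.sum_range_succ']
        have hstep : ∀ j ∈ Finset.range (z.length + 1),
            (-1 : K) ^ (j + 1) *
              (Multiset.count (e :: u')
                (shuffles ((c :: z).take (j + 1)) (((c :: z).drop (j + 1)).reverse)) : K)
            = ((-1 : K) ^ (j + 1) *
                (if e = c then
                  (Multiset.count u' (shuffles (z.take j) ((z.drop j).reverse)) : K) else 0))
              + ((-1 : K) ^ (j + 1) *
                (if e = b ∧ j + 1 ≤ z.length then
                  (Multiset.count u'
                    (shuffles ((c :: z'').take (j + 1)) (((c :: z'').drop (j + 1)).reverse)) : K)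
                  else 0)) := by
          intro j hj
          simp only [Finset.mem_range] at hj
          rcases Nat.lt_or_ge j z.length with hlt | hge
          · rw [hCsucc j hlt,
              show (if e = b ∧ j + 1 ≤ z.length then
                  (Multiset.count u'
                    (shuffles ((c :: z'').take (j + 1)) (((c :: z'').drop (j + 1)).reverse)) : K)
                  else 0)
                = (if e = b then
                  (Multiset.count u'
                    (shuffles ((c :: z'').take (j + 1)) (((c :: z'').drop (j + 1)).reverse)) : K)
                  else 0) from by
                by_cases heb : e = b
                · rw [if_pos ⟨heb, by omega⟩, if_pos heb]
                · rw [if_neg (fun h => heb h.1), if_neg heb]]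
            ring
          · have hj2 : j = z.length := by omega
            subst hj2
            have hcond : ¬ (e = b ∧ z.length + 1 ≤ z.length) :=
              fun h => absurd h.2 (by omega)
            rw [hClast, if_neg hcond]
            ring
        rw [Finset.sum_congr rfl hstep, Finset.sum_add_distrib]
        have hS1 : (∑ j ∈ Finset.range (z.length + 1), (-1 : K) ^ (j + 1) *
            (if e = c then
              (Multiset.count u' (shuffles (z.take j) ((z.drop j).reverse)) : K) else 0)) = 0 := by
          by_cases hec : e = c
          · simp only [hec, if_true]
            have h0 := ihN z (by omega) (by rw [hz]; simp) u'
            rw [Finset.sum_congr rfl (fun j _ => show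
                (-1 : K) ^ (j + 1) *
                  (Multiset.count u' (shuffles (z.take j) ((z.drop j).reverse)) : K)
                = -((-1 : K) ^ j *
                  (Multiset.count u' (shuffles (z.take j) ((z.drop j).reverse)) : K)) from by
              ring)]
            rw [Finset.sum_neg_distrib, h0, neg_zero]
          · simp [hec]
        have hS2 : (∑ j ∈ Finset.range (z.length + 1), (-1 : K) ^ (j + 1) *
            (if e = b ∧ j + 1 ≤ z.length then
              (Multiset.count u'
                (shuffles ((c :: z'').take (j + 1)) (((c :: z'').drop (j + 1)).reverse)) : K)
              else 0))
            = -(if e = b then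
                (Multiset.count u'
                  (shuffles ((c :: z'').take 0) (((c :: z'').drop 0).reverse)) : K) else 0) := by
          by_cases heb : e = b
          · have h0 := ihN (c :: z'') (by simp only [List.length_cons]; omega)
              (by simp) u'
            rw [List.length_cons, Finset.sum_range_succ'] at h0
            have hcond : ¬ (e = b ∧ z''.length + 1 + 1 ≤ z.length) :=
              fun h => absurd h.2 (by omega)
            rw [show z.length + 1 = (z''.length + 1) + 1 by omega, Finset.sum_range_succ,
              if_neg hcond]
            rw [Finset.sum_congr rfl (fun j hj => by
              simp only [Finset.mem_range] at hj
              rw [if_pos ⟨heb, by omega⟩])]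
            rw [if_pos heb]
            simp only [pow_zero, one_mul] at h0
            linear_combination h0
          · simp [heb]
        rw [hS1, hS2, hC0]
        simp

lemma rbrk_eq (n : ℕ) :
    ∀ (w : List (Fin d)), w ≠ [] → w.length ≤ n → ∀ x : List (Fin d),
      rbrk (K := K) n w x
        = ∑ i ∈ Finset.range (x.length + 1),
            (i : K) * (-1 : K) ^ (x.length - i) *
              (Multiset.count w (shuffles (x.take i) ((x.drop i).reverse)) : K) := by
  intro w
  induction w with
  | nil => intro h; exact absurd rfl h
  | cons a u ihw =>
    intro _ hwlen x
    cases u with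
    | nil =>
      have hr : rbrk (K := K) n [a] = gen a := by rw [rbrk]
      rw [hr]
      match x with
      | [] => simp [gen]
      | [e] =>
        rw [show (([e] : List (Fin d)).length + 1) = 2 from rfl,
          Finset.sum_range_succ, Finset.sum_range_succ, Finset.sum_range_zero]
        simp only [List.take_zero, List.drop_zero, List.take_succ_cons, List.take_nil,
          List.drop_succ_cons, List.drop_nil, List.reverse_nil, List.length_singleton,
          shuffles_nil_right, Multiset.count_singleton, gen]
        by_cases h : e = a
        · subst h; simp
        · have h2 : ¬ a = e := fun hh => h hh.symm
          simp [h, h2]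
      | e1 :: e2 :: xs =>
        rw [show gen (K := K) a (e1 :: e2 :: xs) = 0 from by simp [gen]]
        refine (Finset.sum_eq_zero fun i hi => ?_).symm
        rw [count_shuffles_zero_of_length]
        · ring
        · simp only [Finset.mem_range, List.length_cons] at hi
          rw [List.length_take, List.length_reverse, List.length_drop]
          simp only [List.length_cons]
          show (1 : ℕ) ≠ _
          omega
    | cons b u' =>
      cases x with
      | nil =>
        rw [rbrk_support n _ _ (by simp)]
        simp
      | cons c y =>
        obtain ⟨x', e, hx⟩ : ∃ x' e, c :: y = x' ++ [e] := by
          rcases List.eq_nil_or_concat (c :: y) with h | ⟨x', e, h⟩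
          · exact absurd h (by simp)
          · exact ⟨x', e, by rw [h, List.concat_eq_append]⟩
        have hxlen : y.length = x'.length := by
          have := congrArg List.length hx; simpa using this
        have hulen : (b :: u').length ≤ n := by
          simp only [List.length_cons] at hwlen ⊢; omega
        rw [rbrk_cons_eval n a b u' c y x' e (by simpa using hwlen) hx]
        simp only [List.length_cons]
        conv_rhs => rw [Finset.sum_range_succ']
        have hstep : ∀ i ∈ Finset.range (y.length + 1),
            ((i : ℕ) + 1 : ℕ) * (-1 : K) ^ (y.length + 1 - (i + 1)) *
              (Multiset.count (a :: b :: u')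
                (shuffles ((c :: y).take (i + 1)) (((c :: y).drop (i + 1)).reverse)) : K)
            = (((i : K) + 1) * (-1 : K) ^ (y.length - i) *
                (if a = c then
                  (Multiset.count (b :: u') (shuffles (y.take i) ((y.drop i).reverse)) : K)
                  else 0))
              + (((i : K) + 1) * (-1 : K) ^ (y.length - i) *
                (if a = e ∧ i + 1 ≤ y.length then
                  (Multiset.count (b :: u')
                    (shuffles (x'.take (i + 1)) ((x'.drop (i + 1)).reverse)) : K)
                  else 0)) := by
          intro i hi
          simp only [Finset.mem_range] at hi
          rw [show y.length + 1 - (i + 1) = y.length - i by omega]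
          rcases Nat.lt_or_ge i y.length with hlt | hge
          · have hdrop : y.drop i = x'.drop (i + 1) ++ [e] := by
              have h2 := congrArg (List.drop (i + 1)) hx
              rwa [List.drop_succ_cons, List.drop_append_of_le_length (by omega)] at h2
            have htake : c :: y.take i = x'.take (i + 1) := by
              have h2 := congrArg (List.take (i + 1)) hx
              rwa [List.take_succ_cons, List.take_append_of_le_length (by omega)] at h2
            rw [List.take_succ_cons, List.drop_succ_cons, hdrop,
              show (x'.drop (i + 1) ++ [e]).reverse = e :: (x'.drop (i + 1)).reverse by simp,
              shuffles_cons_cons, Multiset.count_add, count_cons_map_cons, count_cons_map_cons,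
              show e :: (x'.drop (i + 1)).reverse = (y.drop i).reverse by
                rw [hdrop]; simp,
              htake]
            push_cast
            by_cases hae : a = e
            · rw [if_pos hae, if_pos (show a = e ∧ i + 1 ≤ y.length from ⟨hae, by omega⟩)]
              split_ifs <;> ring
            · rw [if_neg hae, if_neg (show ¬(a = e ∧ i + 1 ≤ y.length) from fun h => hae h.1)]
              split_ifs <;> ring
          · have hi2 : i = y.length := by omega
            subst hi2
            have hcond : ¬ (a = e ∧ y.length + 1 ≤ y.length) := fun h => absurd h.2 (by omega)
            rw [if_neg hcond,
              show (c :: y).take (y.length + 1) = c :: y from by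
                rw [show y.length + 1 = (c :: y).length from rfl, List.take_length],
              show (c :: y).drop (y.length + 1) = [] from by
                rw [show y.length + 1 = (c :: y).length from rfl, List.drop_length],
              show y.take y.length = y from List.take_length,
              show y.drop y.length = [] from List.drop_length]
            simp only [List.reverse_nil, shuffles_nil_right, Multiset.count_singleton]
            by_cases hac : a = c
            · subst hac
              by_cases huy : b :: u' = y
              · rw [huy]; simp
              · have : ¬ (a :: b :: u' = a :: y) := fun h => huy (List.cons_eq_cons.1 h).2
                simp only [this, if_false, huy, if_true]
                push_cast
                simp
            · have h1 : ¬ (a :: b :: u' = c :: y) := fun h => hac (List.cons_eq_cons.1 h).1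
              simp [h1, hac]
        rw [Finset.sum_congr rfl hstep, Finset.sum_add_distrib]
        have hS1 : (∑ i ∈ Finset.range (y.length + 1),
            ((i : K) + 1) * (-1 : K) ^ (y.length - i) *
              (if a = c then
                (Multiset.count (b :: u') (shuffles (y.take i) ((y.drop i).reverse)) : K)
                else 0))
            = (if c = a then rbrk (K := K) n (b :: u') y else 0) := by
          by_cases hac : a = c
          · rw [if_pos hac.symm]
            simp only [hac, if_true]
            rcases List.eq_nil_or_concat y with rfl | ⟨y₀, ey, hy⟩
            · rw [rbrk_support n _ _ (by simp)]
              simp [shuffles_nil_left, Multiset.count_singleton]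
            · have hyne : y ≠ [] := by rw [hy]; simp
              have hsplit : ∀ i ∈ Finset.range (y.length + 1),
                  ((i : K) + 1) * (-1 : K) ^ (y.length - i) *
                    (Multiset.count (b :: u') (shuffles (y.take i) ((y.drop i).reverse)) : K)
                  = (i : K) * (-1 : K) ^ (y.length - i) *
                      (Multiset.count (b :: u') (shuffles (y.take i) ((y.drop i).reverse)) : K)
                    + (-1 : K) ^ y.length *
                      ((-1 : K) ^ i *
                        (Multiset.count (b :: u')
                          (shuffles (y.take i) ((y.drop i).reverse)) : K)) := by
                intro i hi
                simp only [Finset.mem_range] at hi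
                have hpow : (-1 : K) ^ (y.length - i) = (-1 : K) ^ y.length * (-1 : K) ^ i := by
                  rw [← pow_add, show y.length + i = (y.length - i) + 2 * i by omega,
                    pow_add, pow_mul]
                  simp
                rw [hpow]; ring
              rw [Finset.sum_congr rfl hsplit, Finset.sum_add_distrib,
                ← ihw (by simp) hulen y, ← Finset.mul_sum,
                shuffle_antipode y.length y le_rfl hyne (b :: u'), mul_zero, add_zero]
          · rw [if_neg (fun h => hac h.symm)]
            simp [hac]
        have hS2 : (∑ i ∈ Finset.range (y.length + 1),
            ((i : K) + 1) * (-1 : K) ^ (y.length - i) *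
              (if a = e ∧ i + 1 ≤ y.length then
                (Multiset.count (b :: u')
                  (shuffles (x'.take (i + 1)) ((x'.drop (i + 1)).reverse)) : K)
                else 0))
            = -(if e = a then rbrk (K := K) n (b :: u') x' else 0) := by
          by_cases hae : a = e
          · rw [if_pos hae.symm]
            rw [Finset.sum_range_succ]
            have hcond : ¬ (a = e ∧ y.length + 1 ≤ y.length) := fun h => absurd h.2 (by omega)
            rw [if_neg hcond, mul_zero, add_zero]
            rw [Finset.sum_congr rfl (fun i hi => by
              rw [if_pos ⟨hae, by
                simp only [Finset.mem_range] at hi; omega⟩])]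
            have hx'eq := ihw (by simp) hulen x'
            rw [← hxlen] at hx'eq
            rw [Finset.sum_range_succ'] at hx'eq
            simp only [Nat.cast_zero, zero_mul, add_zero] at hx'eq
            rw [Finset.sum_congr rfl (fun (i : ℕ) (hi : i ∈ Finset.range y.length) => show
                ((i : K) + 1) * (-1 : K) ^ (y.length - i) *
                  (Multiset.count (b :: u')
                    (shuffles (x'.take (i + 1)) ((x'.drop (i + 1)).reverse)) : K)
                = -(((i + 1 : ℕ) : K) * (-1 : K) ^ (y.length - (i + 1)) *
                  (Multiset.count (b :: u')
                    (shuffles (x'.take (i + 1)) ((x'.drop (i + 1)).reverse)) : K)) from by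
              simp only [Finset.mem_range] at hi
              rw [show y.length - i = (y.length - (i + 1)) + 1 by omega, pow_succ]
              push_cast
              ring)]
            rw [Finset.sum_neg_distrib, ← hx'eq]
          · have hc : ∀ i ∈ Finset.range (y.length + 1),
                ((i : K) + 1) * (-1 : K) ^ (y.length - i) *
                  (if a = e ∧ i + 1 ≤ y.length then
                    (Multiset.count (b :: u')
                      (shuffles (x'.take (i + 1)) ((x'.drop (i + 1)).reverse)) : K)
                    else 0) = 0 := by
              intro i hi
              rw [if_neg (fun h => hae h.1), mul_zero]
            rw [Finset.sum_eq_zero hc, if_neg (fun h => hae h.symm), neg_zero]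
        rw [hS1, hS2]
        push_cast
        ring

lemma inLie_sum {n : ℕ} {ι : Type*} (s : Finset ι) (f : ι → (List (Fin d) → K))
    (h : ∀ i ∈ s, InLie d n K (f i)) : InLie d n K (∑ i ∈ s, f i) :=
  Finset.sum_induction f (fun g => InLie d n K g) (fun _ _ ha hb => InLie.add ha hb)
    InLie.zero h

lemma sum_ofFn_count (m : ℕ) (P : List (Fin d) → K) :
    ∀ (S : Multiset (List (Fin d))), (∀ v ∈ S, v.length = m) →
      ∑ f : Fin m → Fin d, P (List.ofFn f) * (Multiset.count (List.ofFn f) S : K)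
        = (S.map P).sum := by
  intro S
  induction S using Multiset.induction_on with
  | empty => simp
  | cons a S ih =>
    intro hS
    have ha : a.length = m := hS a (Multiset.mem_cons_self a S)
    have expand : ∀ f : Fin m → Fin d,
        P (List.ofFn f) * (Multiset.count (List.ofFn f) (a ::ₘ S) : K)
        = P (List.ofFn f) * (Multiset.count (List.ofFn f) S : K)
          + (if List.ofFn f = a then P (List.ofFn f) else 0) := by
      intro f
      rw [Multiset.count_cons]
      push_cast
      split_ifs <;> ring
    rw [Finset.sum_congr rfl (fun f _ => expand f), Finset.sum_add_distrib,
      ih (fun v hv => hS v (Multiset.mem_cons_of_mem hv))]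
    have hsingle : (∑ f : Fin m → Fin d,
        (if List.ofFn f = a then P (List.ofFn f) else 0)) = P a := by
      subst ha
      rw [Finset.sum_eq_single_of_mem (fun i => a.get i) (Finset.mem_univ _)]
      · rw [List.ofFn_get a]
        simp
      · intro f _ hne
        rw [if_neg (fun h => hne (List.ofFn_injective (h.trans (List.ofFn_get a).symm)))]
    rw [hsingle, Multiset.map_cons, Multiset.sum_cons]
    ring

end ReeAux


/-- A word is a Lyndon word if it is nonempty and strictly lexicographically smaller
than each of its proper rotations. -/
def IsLyndon {α : Type*} [LinearOrder α] (l : List α) : Prop :=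
  l ≠ [] ∧ ∀ k : ℕ, 0 < k → k < l.length → l < l.rotate k

open Classical in
/-- The length of the longest proper Lyndon suffix of a word. -/
noncomputable def suffixLen {d : ℕ} (l : List (Fin d)) : ℕ :=
  Nat.findGreatest (fun j => IsLyndon (l.drop (l.length - j))) (l.length - 1)

/-- Fuel-based recursion computing the Lyndon bracketing `b(I)`:
`b(i) = e_i` and `b(I) = [b(I₁), b(I₂)]` where `I = I₁I₂` with `I₂` the longest proper
Lyndon right factor of `I`. -/
noncomputable def bracketingFuel (K : Type*) [Field K] {d : ℕ} (n : ℕ) :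
    ℕ → List (Fin d) → (List (Fin d) → K)
  | _, [i] => gen i
  | fuel + 1, l =>
      let m := min (max 1 (suffixLen l)) (l.length - 1)
      lieT n (bracketingFuel K n fuel (l.take (l.length - m)))
             (bracketingFuel K n fuel (l.drop (l.length - m)))
  | 0, _ => 0

/-- The Lyndon bracketing `b(I)` of a word `I`, as an element of `T^n(K^d)`. -/
noncomputable def bracketing (K : Type*) [Field K] {d : ℕ} (n : ℕ) (l : List (Fin d)) :
    List (Fin d) → K :=
  bracketingFuel K n l.length l

/-- Ree's criterion: an element of the degree `≥ 1` part of `T^n(ℝ^d)` is a Lie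
polynomial if and only if all shuffle linear forms `σ_{I ⧢ J}` (for nonempty words
`I, J` with `|I| + |J| ≤ n`) vanish on it. -/
theorem lie_iff_shuffles_vanish (d n : ℕ) (P : List (Fin d) → ℝ)
    (h0 : P [] = 0) (htr : ∀ l : List (Fin d), n < l.length → P l = 0) :
    InLie d n ℝ P ↔
      ∀ I J : List (Fin d), I ≠ [] → J ≠ [] → I.length + J.length ≤ n →
        shuffleForm P I J = 0 := by
  constructor
  · intro h I J hI hJ hn
    exact (good_of_inLie h).2 I J hI hJ hn
  · intro hσ
    have hcomp : ∀ m, 1 ≤ m → m ≤ n → InLie d n ℝ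
        (fun l => if l.length = m then P l else 0) := by
      intro m hm1 hmn
      have hne : ∀ f : Fin m → Fin d, List.ofFn f ≠ [] := by
        intro f hh
        have := congrArg List.length hh
        simp only [List.length_ofFn, List.length_nil] at this
        omega
      have hkey : (fun l => if l.length = m then P l else 0)
          = (m : ℝ)⁻¹ • ∑ f : Fin m → Fin d,
              P (List.ofFn f) • rbrk (K := ℝ) n (List.ofFn f) := by
        funext x
        simp only [Pi.smul_apply, Finset.sum_apply, smul_eq_mul]
        by_cases hxm : x.length = m
        · have hterm : ∀ f : Fin m → Fin d,
              P (List.ofFn f) * rbrk (K := ℝ) n (List.ofFn f) x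
              = ∑ i ∈ Finset.range (x.length + 1),
                  (i : ℝ) * (-1 : ℝ) ^ (x.length - i) *
                    (P (List.ofFn f) *
                      (Multiset.count (List.ofFn f)
                        (shuffles (x.take i) ((x.drop i).reverse)) : ℝ)) := by
            intro f
            rw [rbrk_eq n (List.ofFn f) (hne f)
              (by rw [List.length_ofFn]; omega) x, Finset.mul_sum]
            exact Finset.sum_congr rfl fun i _ => by ring
          rw [Finset.sum_congr rfl (fun f _ => hterm f), Finset.sum_comm]
          have hinner : ∀ i ∈ Finset.range (x.length + 1),
              (∑ f : Fin m → Fin d,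
                (i : ℝ) * (-1 : ℝ) ^ (x.length - i) *
                  (P (List.ofFn f) *
                    (Multiset.count (List.ofFn f)
                      (shuffles (x.take i) ((x.drop i).reverse)) : ℝ)))
              = (i : ℝ) * (-1 : ℝ) ^ (x.length - i) *
                  shuffleForm P (x.take i) ((x.drop i).reverse) := by
            intro i hi
            simp only [Finset.mem_range] at hi
            rw [← Finset.mul_sum]
            congr 1
            rw [sum_ofFn_count m P (shuffles (x.take i) ((x.drop i).reverse))
              (fun v hv => by
                have := length_of_mem_shuffles _ _ v hv
                rw [List.length_take, List.length_reverse, List.length_drop] at this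
                omega)]
            rfl
          rw [Finset.sum_congr rfl hinner]
          rw [Finset.sum_eq_single_of_mem x.length (by simp)]
          · rw [List.take_length, List.drop_length]
            simp only [List.reverse_nil, Nat.sub_self, pow_zero, mul_one,
              shuffleForm_nil_right]
            rw [hxm]
            field_simp
            simp
          · intro i hi hne2
            simp only [Finset.mem_range] at hi
            rcases Nat.eq_zero_or_pos i with rfl | hipos
            · simp
            · have h1 : x.take i ≠ [] := by
                simp only [ne_eq, List.take_eq_nil_iff]
                push_neg
                refine ⟨by omega, ?_⟩
                intro hx0
                rw [hx0] at hxm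
                simp at hxm
                omega
              have h2 : (x.drop i).reverse ≠ [] := by
                simp only [ne_eq, List.reverse_eq_nil_iff, List.drop_eq_nil_iff]
                omega
              rw [hσ (x.take i) ((x.drop i).reverse) h1 h2
                (by
                  rw [List.length_take, List.length_reverse, List.length_drop]
                  omega)]
              ring
        · rw [if_neg hxm]
          rw [Finset.sum_eq_zero (fun f _ => by
            rw [rbrk_support n (List.ofFn f) x
              (by rw [List.length_ofFn]; exact fun hh => hxm hh)]
            ring)]
          ring
      rw [hkey]
      exact InLie.smul _ (inLie_sum _ _ (fun f _ =>
        InLie.smul _ (inLie_rbrk n (List.ofFn f) (hne f))))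
    have hdecomp : P = ∑ m ∈ Finset.Icc 1 n,
        (fun l => if l.length = m then P l else 0) := by
      funext l
      rw [Finset.sum_apply]
      rw [Finset.sum_ite_eq (Finset.Icc 1 n) l.length (fun _ => P l)]
      by_cases hl : l.length ∈ Finset.Icc 1 n
      · rw [if_pos hl]
      · rw [if_neg hl]
        simp only [Finset.mem_Icc, not_and_or, not_le] at hl
        rcases hl with hl | hl
        · have : l = [] := by
            cases l
            · rfl
            · simp at hl
          rw [this, h0]
        · rw [htr l hl]
    rw [hdecomp]
    exact inLie_sum _ _ (fun m hm =>
      hcomp m (Finset.mem_Icc.1 hm).1 (Finset.mem_Icc.1 hm).2)
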